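/- Let p = 2l and 0 < η ≤ 1/(1000l). For y ∈ Y and z ∈ ℝ^{d1}, define y⁺(z) := P_Y(y + η∇_y f(x*(y,z), y)). Then f̂(x*(y,z), y*(x*(y,z)), z) − f̂(x*(y,z), y⁺(z), z) ≤ (2(1 + ηl)/(μη²))·‖y − y⁺(z)‖². -/

import Mathlib

open Set Metric
open scoped RealInnerProductSpace

noncomputable def gradx {d1 d2 : ℕ}
    (f : EuclideanSpace ℝ (Fin d1) → EuclideanSpace ℝ (Fin d2) → ℝ)
    (x : EuclideanSpace ℝ (Fin d1)) (y : EuclideanSpace ℝ (Fin d2)) :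
    EuclideanSpace ℝ (Fin d1) :=
  gradient (fun x' => f x' y) x

noncomputable def grady {d1 d2 : ℕ}
    (f : EuclideanSpace ℝ (Fin d1) → EuclideanSpace ℝ (Fin d2) → ℝ)
    (x : EuclideanSpace ℝ (Fin d1)) (y : EuclideanSpace ℝ (Fin d2)) :
    EuclideanSpace ℝ (Fin d2) :=
  gradient (fun y' => f x y') y

/-- `f` is differentiable and `l`-smooth: the gradient is `l`-Lipschitz with respect to the
Euclidean norm on the product space (stated in squared form). -/
def IsLSmooth {d1 d2 : ℕ} (l : ℝ)
    (f : EuclideanSpace ℝ (Fin d1) → EuclideanSpace ℝ (Fin d2) → ℝ) : Prop :=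
  Differentiable ℝ (fun w : EuclideanSpace ℝ (Fin d1) × EuclideanSpace ℝ (Fin d2) => f w.1 w.2) ∧
  ∀ x₁ x₂ y₁ y₂,
    ‖gradx f x₁ y₁ - gradx f x₂ y₂‖ ^ 2 + ‖grady f x₁ y₁ - grady f x₂ y₂‖ ^ 2
      ≤ l ^ 2 * (‖x₁ - x₂‖ ^ 2 + ‖y₁ - y₂‖ ^ 2)

/-- `f̂(x, y, z) = f(x, y) + (p/2)‖x − z‖²`. -/
noncomputable def fhat {d1 d2 : ℕ}
    (f : EuclideanSpace ℝ (Fin d1) → EuclideanSpace ℝ (Fin d2) → ℝ) (p : ℝ)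
    (x : EuclideanSpace ℝ (Fin d1)) (y : EuclideanSpace ℝ (Fin d2))
    (z : EuclideanSpace ℝ (Fin d1)) : ℝ :=
  f x y + p / 2 * ‖x - z‖ ^ 2


lemma convexOn_inner_grad_le' {d : ℕ} {s : Set (EuclideanSpace ℝ (Fin d))}
    {φ : EuclideanSpace ℝ (Fin d) → ℝ} {G u w : EuclideanSpace ℝ (Fin d)}
    (hφ : ConvexOn ℝ s φ) (hG : HasGradientAt φ G u) (hu : u ∈ s) (hw : w ∈ s) :
    ⟪G, w - u⟫ ≤ φ w - φ u := by
  set γ : ℝ → EuclideanSpace ℝ (Fin d) := fun t => u + t • (w - u) with hγdef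
  have hγ0 : γ 0 = u := by simp [hγdef]
  have hγ1 : γ 1 = w := by simp [hγdef]
  have hγd : HasDerivAt γ (w - u) 0 := by
    have h1 : HasDerivAt (fun t : ℝ => t • (w - u)) ((1:ℝ) • (w - u)) 0 :=
      (hasDerivAt_id (0:ℝ)).smul_const (w - u)
    simpa [hγdef] using h1.const_add u
  have hgd : HasDerivAt (fun t => φ (γ t)) ⟪G, w - u⟫ 0 := by
    have hF : HasFDerivAt φ ((InnerProductSpace.toDual ℝ _) G) u :=
      hasGradientAt_iff_hasFDerivAt.mp hG
    have hF' : HasFDerivAt φ ((InnerProductSpace.toDual ℝ _) G) (γ 0) := hγ0 ▸ hF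
    have h2 := hF'.comp_hasDerivAt 0 hγd
    simpa [Function.comp_def, InnerProductSpace.toDual_apply_apply] using h2
  have hmem : ∀ t ∈ Icc (0:ℝ) 1, γ t ∈ s := by
    intro t ht
    have h3 := hφ.1 hu hw (sub_nonneg.mpr ht.2) ht.1 (by ring)
    have : γ t = (1 - t) • u + t • w := by
      simp [hγdef, smul_sub, sub_smul]; abel
    rw [this]; exact h3
  have hconv : ConvexOn ℝ (Icc (0:ℝ) 1) (fun t => φ (γ t)) := by
    refine ⟨convex_Icc 0 1, ?_⟩
    intro a ha b hb ca cb hca hcb hab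
    have hcomb : γ (ca • a + cb • b) = ca • γ a + cb • γ b := by
      have : ca • γ a + cb • γ b = (ca + cb) • u + (ca * a + cb * b) • (w - u) := by
        simp [hγdef, smul_add, add_smul, smul_smul]; abel
      rw [this, hab, one_smul]
      simp [hγdef, smul_eq_mul]
    dsimp only
    rw [hcomb]
    exact hφ.2 (hmem a ha) (hmem b hb) hca hcb hab
  have hs := hconv.le_slope_of_hasDerivAt (left_mem_Icc.mpr zero_le_one)
    (right_mem_Icc.mpr zero_le_one) zero_lt_one hgd
  rw [slope_def_field] at hs
  simpa [hγ0, hγ1] using hs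

lemma strong_concave_upper {d : ℕ} {s : Set (EuclideanSpace ℝ (Fin d))} {μ : ℝ}
    {ψ : EuclideanSpace ℝ (Fin d) → ℝ} {G u w : EuclideanSpace ℝ (Fin d)}
    (hψ : ConcaveOn ℝ s (fun v => ψ v + μ / 2 * ‖v‖ ^ 2))
    (hG : HasGradientAt ψ G u) (hu : u ∈ s) (hw : w ∈ s) :
    ψ w ≤ ψ u + ⟪G, w - u⟫ - μ / 2 * ‖w - u‖ ^ 2 := by
  set φ : EuclideanSpace ℝ (Fin d) → ℝ := fun v => -(ψ v + μ / 2 * ‖v‖ ^ 2) with hφdef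
  have hφconv : ConvexOn ℝ s φ := hψ.neg
  have hgrad : HasGradientAt φ (-(G + μ • u)) u := by
    have h1 : HasFDerivAt ψ ((InnerProductSpace.toDual ℝ _) G) u :=
      hasGradientAt_iff_hasFDerivAt.mp hG
    have h2 : HasFDerivAt (fun v : EuclideanSpace ℝ (Fin d) => ‖v‖ ^ 2)
        (2 • (innerSL ℝ u)) u := (hasStrictFDerivAt_norm_sq u).hasFDerivAt
    have h3 := (h1.add (h2.const_mul (μ / 2))).neg
    rw [hasGradientAt_iff_hasFDerivAt]
    have heq : (InnerProductSpace.toDual ℝ (EuclideanSpace ℝ (Fin d))) (-(G + μ • u)) =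
        -((InnerProductSpace.toDual ℝ _) G + (μ / 2) • (2 • (innerSL ℝ u))) := by
      ext v
      simp [InnerProductSpace.toDual_apply_apply, inner_add_left, inner_smul_left, inner_neg_left]
      ring
    rw [heq]
    exact h3
  have hkey := convexOn_inner_grad_le' hφconv hgrad hu hw
  have hnorm : ‖w - u‖ ^ 2 = ‖w‖ ^ 2 - 2 * ⟪u, w⟫ + ‖u‖ ^ 2 := by
    rw [norm_sub_sq_real, real_inner_comm w u]
  have hinner : ⟪-(G + μ • u), w - u⟫ = -⟪G, w - u⟫ - μ * (⟪u, w⟫ - ‖u‖ ^ 2) := by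
    simp only [inner_neg_left, inner_add_left, real_inner_smul_left, inner_sub_right,
      real_inner_self_eq_norm_sq]
    ring
  have hφw : φ w = -(ψ w + μ / 2 * ‖w‖ ^ 2) := rfl
  have hφu : φ u = -(ψ u + μ / 2 * ‖u‖ ^ 2) := rfl
  rw [hφw, hφu, hinner] at hkey
  have hμnorm : μ * ‖w - u‖ ^ 2 = μ * ‖w‖ ^ 2 - 2 * μ * ⟪u, w⟫ + μ * ‖u‖ ^ 2 := by
    rw [hnorm]; ring
  linarith [hkey, hμnorm]

lemma proj_vi {d : ℕ} {Y : Set (EuclideanSpace ℝ (Fin d))} (hYconv : Convex ℝ Y)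
    (projY : EuclideanSpace ℝ (Fin d) → EuclideanSpace ℝ (Fin d))
    (hprojY_mem : ∀ v, projY v ∈ Y)
    (hprojY : ∀ v, ∀ w ∈ Y, ‖v - projY v‖ ≤ ‖v - w‖)
    (v : EuclideanSpace ℝ (Fin d)) {w : EuclideanSpace ℝ (Fin d)} (hw : w ∈ Y) :
    ⟪v - projY v, w - projY v⟫ ≤ 0 := by
  haveI : Nonempty Y := ⟨⟨projY v, hprojY_mem v⟩⟩
  have h_eq : ‖v - projY v‖ = ⨅ w : Y, ‖v - w‖ :=
    le_antisymm (le_ciInf fun w => hprojY v w w.2)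
      (ciInf_le ⟨0, by rintro _ ⟨w, rfl⟩; exact norm_nonneg _⟩
        (⟨projY v, hprojY_mem v⟩ : Y))
  exact (norm_eq_iInf_iff_real_inner_le_zero hYconv (hprojY_mem v)).mp h_eq w hw

/-- with `p = 2l`, `y⁺(z) = P_Y(y + η∇_y f(x*(y,z), y))` and `y*(x)` the
unique maximizer of the `μ`-strongly concave `f(x,·)` over `Y`,
`f̂(x*(y,z), y*(x*(y,z)), z) − f̂(x*(y,z), y⁺(z), z) ≤ (2(1 + ηl)/(μη²))‖y − y⁺(z)‖²`. -/
theorem statement7 {d1 d2 : ℕ} (l μ η : ℝ) (hl : 0 < l) (hμ : 0 < μ)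
    (f : EuclideanSpace ℝ (Fin d1) → EuclideanSpace ℝ (Fin d2) → ℝ)
    (hf : IsLSmooth l f)
    (Y : Set (EuclideanSpace ℝ (Fin d2))) (hYne : Y.Nonempty) (hYcl : IsClosed Y)
    (hYconv : Convex ℝ Y)
    (projY : EuclideanSpace ℝ (Fin d2) → EuclideanSpace ℝ (Fin d2))
    (hprojY_mem : ∀ v, projY v ∈ Y)
    (hprojY : ∀ v, ∀ w ∈ Y, ‖v - projY v‖ ≤ ‖v - w‖)
    (hconc : ∀ x, StrongConcaveOn Y μ (f x))
    (ystar : EuclideanSpace ℝ (Fin d1) → EuclideanSpace ℝ (Fin d2))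
    (hystar_mem : ∀ x, ystar x ∈ Y)
    (hystar : ∀ x, ∀ y ∈ Y, f x y ≤ f x (ystar x))
    -- `x*(y, z)`: the (unique) minimizer of `x ↦ f̂(x, y, z)` with `p = 2l`
    (xstar : EuclideanSpace ℝ (Fin d2) → EuclideanSpace ℝ (Fin d1) → EuclideanSpace ℝ (Fin d1))
    (hxstar : ∀ y z x, fhat f (2 * l) (xstar y z) y z ≤ fhat f (2 * l) x y z)
    (hη : 0 < η) (hη' : η ≤ 1 / (1000 * l))
    (y : EuclideanSpace ℝ (Fin d2)) (hy : y ∈ Y) (z : EuclideanSpace ℝ (Fin d1)) :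
    fhat f (2 * l) (xstar y z) (ystar (xstar y z)) z
        - fhat f (2 * l) (xstar y z) (projY (y + η • grady f (xstar y z) y)) z
      ≤ 2 * (1 + η * l) / (μ * η ^ 2)
          * ‖y - projY (y + η • grady f (xstar y z) y)‖ ^ 2 := by
  set x := xstar y z with hx
  set g := grady f x y with hgdef
  set q := projY (y + η • g) with hqdef
  set ys := ystar x with hysdef
  have hqY : q ∈ Y := hprojY_mem _
  have hysY : ys ∈ Y := hystar_mem x
  -- differentiability of f x ·
  have hfx_diff : Differentiable ℝ (fun y' => f x y') := by
    intro y₀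
    have hpair : DifferentiableAt ℝ
        (fun y' : EuclideanSpace ℝ (Fin d2) =>
          ((x, y') : EuclideanSpace ℝ (Fin d1) × EuclideanSpace ℝ (Fin d2))) y₀ :=
      DifferentiableAt.prodMk (differentiableAt_const x) differentiableAt_id
    exact (hf.1 (x, y₀)).comp y₀ hpair
  have hgrad_at : ∀ y₀, HasGradientAt (fun y' => f x y') (grady f x y₀) y₀ :=
    fun y₀ => (hfx_diff y₀).hasGradientAt
  -- Lipschitz bound on grady
  have hLip : ∀ y₁ y₂, ‖grady f x y₁ - grady f x y₂‖ ≤ l * ‖y₁ - y₂‖ := by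
    intro y₁ y₂
    have h := hf.2 x x y₁ y₂
    have h' : ‖grady f x y₁ - grady f x y₂‖ ^ 2 ≤ (l * ‖y₁ - y₂‖) ^ 2 := by
      have hx0 : ‖x - x‖ = 0 := by simp
      rw [hx0] at h
      nlinarith [sq_nonneg ‖gradx f x y₁ - gradx f x y₂‖]
    have hs := Real.sqrt_le_sqrt h'
    rwa [Real.sqrt_sq (norm_nonneg _),
      Real.sqrt_sq (mul_nonneg hl.le (norm_nonneg _))] at hs
  -- strong concavity first-order bound
  have hsc : ConcaveOn ℝ Y (fun v => f x v + μ / 2 * ‖v‖ ^ 2) :=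
    strongConcaveOn_iff_convex.mp (hconc x)
  have h1 : f x ys ≤ f x q + ⟪grady f x q, ys - q⟫ - μ / 2 * ‖ys - q‖ ^ 2 :=
    strong_concave_upper hsc (hgrad_at q) hqY hysY
  set r := ‖y - q‖ with hrdef
  set dd := ‖ys - q‖ with hddef
  have hr0 : 0 ≤ r := norm_nonneg _
  have hd0 : 0 ≤ dd := norm_nonneg _
  -- bound ⟪grady f x q - g, ys - q⟫
  have h3 : ⟪grady f x q - g, ys - q⟫ ≤ l * r * dd := by
    have hcs := real_inner_le_norm (grady f x q - g) (ys - q)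
    have hL := hLip q y
    rw [norm_sub_rev q y] at hL
    calc ⟪grady f x q - g, ys - q⟫ ≤ ‖grady f x q - g‖ * ‖ys - q‖ := hcs
      _ ≤ (l * r) * dd := by
          apply mul_le_mul_of_nonneg_right _ (norm_nonneg _)
          exact hL
      _ = l * r * dd := by ring
  -- bound ⟪g, ys - q⟫ via the projection variational inequality
  have h4 : ⟪g, ys - q⟫ ≤ 1 / η * (r * dd) := by
    have hvi := proj_vi hYconv projY hprojY_mem hprojY (y + η • g) hysY
    have hsplit : (η • g : EuclideanSpace ℝ (Fin d2)) = ((y + η • g) - q) + (q - y) := by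
      abel
    have h5 : ⟪η • g, ys - q⟫ ≤ r * dd := by
      rw [hsplit, inner_add_left]
      have hcs : ⟪q - y, ys - q⟫ ≤ ‖q - y‖ * ‖ys - q‖ := real_inner_le_norm _ _
      rw [norm_sub_rev q y] at hcs
      have : ⟪y + η • g - q, ys - q⟫ ≤ 0 := hvi
      calc ⟪y + η • g - q, ys - q⟫ + ⟪q - y, ys - q⟫ ≤ 0 + ‖y - q‖ * ‖ys - q‖ :=
            add_le_add this hcs
        _ = r * dd := by rw [zero_add]
    rw [real_inner_smul_left] at h5
    have h5' : ⟪g, ys - q⟫ * η ≤ r * dd := by rw [mul_comm]; exact h5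
    calc ⟪g, ys - q⟫ = (⟪g, ys - q⟫ * η) / η := by field_simp
      _ ≤ (r * dd) / η := by gcongr
      _ = 1 / η * (r * dd) := by ring
  -- combine
  have hsum : ⟪grady f x q, ys - q⟫ = ⟪grady f x q - g, ys - q⟫ + ⟪g, ys - q⟫ := by
    rw [inner_sub_left]; ring
  have hA : f x ys - f x q ≤ (1 / η + l) * (r * dd) - μ / 2 * dd ^ 2 := by
    rw [hsum] at h1
    linarith [h1, h3, h4]
  -- quadratic bound
  have hApos : 0 < 1 / η + l := by positivity
  have h6 : (1 / η + l) * (r * dd) - μ / 2 * dd ^ 2 ≤ (1 / η + l) ^ 2 / (2 * μ) * r ^ 2 := by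
    rw [← sub_nonneg]
    have hre : (1 / η + l) ^ 2 / (2 * μ) * r ^ 2 - ((1 / η + l) * (r * dd) - μ / 2 * dd ^ 2)
        = ((1 / η + l) * r - μ * dd) ^ 2 / (2 * μ) := by
      field_simp
      ring
    rw [hre]
    positivity
  have hηl : η * l ≤ 1 / 1000 := by
    rw [le_div_iff₀ (by norm_num : (0:ℝ) < 1000)]
    calc η * l * 1000 = η * (1000 * l) := by ring
      _ ≤ (1 / (1000 * l)) * (1000 * l) := by
          apply mul_le_mul_of_nonneg_right hη' (by positivity)
      _ = 1 := by field_simp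
  have hA2 : 1 / η + l ≤ 2 / η := by
    have hl' : l ≤ 1 / η := by
      rw [le_div_iff₀ hη, mul_comm]
      linarith [hηl]
    calc 1 / η + l ≤ 1 / η + 1 / η := by linarith
      _ = 2 / η := by ring
  have h7 : (1 / η + l) ^ 2 / (2 * μ) * r ^ 2 ≤ 2 * (1 + η * l) / (μ * η ^ 2) * r ^ 2 := by
    apply mul_le_mul_of_nonneg_right _ (sq_nonneg r)
    calc (1 / η + l) ^ 2 / (2 * μ) ≤ (2 / η) ^ 2 / (2 * μ) := by
          gcongr
      _ = 2 / (μ * η ^ 2) := by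
          field_simp
      _ ≤ 2 * (1 + η * l) / (μ * η ^ 2) := by
          gcongr
          linarith [mul_pos hη hl]
  -- final arithmetic
  have hfinal : f x ys - f x q ≤ 2 * (1 + η * l) / (μ * η ^ 2) * r ^ 2 := by
    calc f x ys - f x q ≤ (1 / η + l) * (r * dd) - μ / 2 * dd ^ 2 := hA
      _ ≤ (1 / η + l) ^ 2 / (2 * μ) * r ^ 2 := h6
      _ ≤ 2 * (1 + η * l) / (μ * η ^ 2) * r ^ 2 := h7
  have hfh : fhat f (2 * l) x ys z - fhat f (2 * l) x q z = f x ys - f x q := by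
    simp [fhat]
  rw [hfh]
  exact hfinal
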